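/- Suppose π* ≥ 1 satisfies Φ(π*) = c. Then π* = sup over nonempty subsets I ⊆ [T] and demand profiles d ∈ D of the ratio (∑_{i∈I} σ(d^i)) / (c + ∑_{i∈I} (max_{k∈[i]} d_k − d_i)). -/
import Mathlib


open Finset MeasureTheory

noncomputable section

/-- A discharging vector `δ` is feasible for demand profile `d` (with capacity `c`
and per-slot limit `dmax`). -/
def Feasible {T : ℕ} (c dmax : ℝ) (d δ : Fin T → ℝ) : Prop :=
  (∑ t, δ t) ≤ c ∧ ∀ t, 0 ≤ δ t ∧ δ t ≤ min dmax (d t)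

/-- Peak-demand reduction `R(d, δ)`. -/
noncomputable def Red {T : ℕ} (d δ : Fin T → ℝ) : ℝ :=
  (⨆ t, d t) - ⨆ t, (d t - δ t)

/-- Offline optimal peak-demand reduction `σ(d)`. -/
noncomputable def offOpt {T : ℕ} (c dmax : ℝ) (d : Fin T → ℝ) : ℝ :=
  sSup {r | ∃ δ : Fin T → ℝ, Feasible c dmax d δ ∧ r = Red d δ}

/-- Prefix maximum `max_{k ∈ [t]} d_k`. -/
noncomputable def prefMax {T : ℕ} (d : Fin T → ℝ) (t : Fin T) : ℝ :=
  ⨆ k : {k : Fin T // k ≤ t}, d k.1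

/-- The uncertainty set `D`: all profiles with entries in `[dlo, dhi]`. -/
def inD {T : ℕ} (dlo dhi : ℝ) (d : Fin T → ℝ) : Prop :=
  ∀ t, dlo ≤ d t ∧ d t ≤ dhi

/-- Reference profile `d^t`: observed demands up to slot `t`, lowest demand `dlo` afterwards. -/
def ref {T : ℕ} (dlo : ℝ) (d : Fin T → ℝ) (t : Fin T) : Fin T → ℝ :=
  fun k => if k ≤ t then d k else dlo

/-- Output of `pCR-PRM(π)` at slot `t`:
`δ_t(π, d) = [d_t − max_{k∈[t]} d_k + σ(d^t)/π]⁺`. -/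
noncomputable def pcr {T : ℕ} (c dmax dlo : ℝ) (π : ℝ) (d : Fin T → ℝ) (t : Fin T) : ℝ :=
  max (d t - prefMax d t + offOpt c dmax (ref dlo d t) / π) 0

/-- Inventory function `Φ(π) = sup_{d ∈ D} ∑_t δ_t(π, d)`. -/
noncomputable def Phi (T : ℕ) (c dmax dlo dhi : ℝ) (π : ℝ) : ℝ :=
  sSup {s | ∃ d : Fin T → ℝ, inD dlo dhi d ∧ s = ∑ t, pcr c dmax dlo π d t}


/-- Each demand value is at most its prefix maximum. -/
lemma le_prefMax {T : ℕ} (d : Fin T → ℝ) (t : Fin T) : d t ≤ prefMax d t :=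
  le_ciSup (f := fun k : {k : Fin T // k ≤ t} => d k.1)
    (Set.Finite.bddAbove (Set.finite_range _)) (⟨t, le_refl t⟩ : {k : Fin T // k ≤ t})

/-- if `Φ(π*) = c`, then
`π* = sup_{∅ ≠ I ⊆ [T], d ∈ D} (∑_{i∈I} σ(d^i)) / (c + ∑_{i∈I} (max_{k∈[i]} d_k − d_i))`. -/
theorem stmt14 (T : ℕ) (hT : 0 < T) (c dmax dlo dhi : ℝ)
    (hc : 0 < c) (hdmax : 0 < dmax) (hdlo : 0 < dlo) (hbd : dlo ≤ dhi)
    (π : ℝ) (hπ : 1 ≤ π) (hΦ : Phi T c dmax dlo dhi π = c) :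
    π = sSup {r | ∃ I : Finset (Fin T), I.Nonempty ∧ ∃ d : Fin T → ℝ, inD dlo dhi d ∧
      r = (∑ i ∈ I, offOpt c dmax (ref dlo d i)) /
          (c + ∑ i ∈ I, (prefMax d i - d i))} := by
  have hπ0 : (0:ℝ) < π := lt_of_lt_of_le one_pos hπ
  set S : Set ℝ := {s | ∃ d : Fin T → ℝ, inD dlo dhi d ∧ s = ∑ t, pcr c dmax dlo π d t} with hS
  set RS : Set ℝ := {r | ∃ I : Finset (Fin T), I.Nonempty ∧ ∃ d : Fin T → ℝ, inD dlo dhi d ∧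
      r = (∑ i ∈ I, offOpt c dmax (ref dlo d i)) /
          (c + ∑ i ∈ I, (prefMax d i - d i))} with hRS
  have hΦ' : sSup S = c := hΦ
  -- S is bounded above
  have hSbdd : BddAbove S := by
    by_contra h
    rw [Real.sSup_of_not_bddAbove h] at hΦ'
    linarith
  have hSne : S.Nonempty := ⟨_, fun _ => dlo, fun t => ⟨le_refl _, hbd⟩, rfl⟩
  -- pcr is nonneg
  have hpcr0 : ∀ (d : Fin T → ℝ) (t : Fin T), 0 ≤ pcr c dmax dlo π d t :=
    fun d t => le_max_right _ _
  -- key bound: for any d ∈ D and any I, ∑_{i∈I} σ(dⁱ) ≤ π * (c + ∑_{i∈I} (M_i - d_i))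
  have key : ∀ (I : Finset (Fin T)) (d : Fin T → ℝ), inD dlo dhi d →
      (∑ i ∈ I, offOpt c dmax (ref dlo d i)) ≤
        π * (c + ∑ i ∈ I, (prefMax d i - d i)) := by
    intro I d hd
    have hmem : (∑ t, pcr c dmax dlo π d t) ∈ S := ⟨d, hd, rfl⟩
    have h1 : (∑ t, pcr c dmax dlo π d t) ≤ c := by
      have := le_csSup hSbdd hmem; rwa [hΦ'] at this
    have h2 : (∑ i ∈ I, pcr c dmax dlo π d i) ≤ ∑ t, pcr c dmax dlo π d t :=
      Finset.sum_le_sum_of_subset_of_nonneg (Finset.subset_univ I)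
        (fun t _ _ => hpcr0 d t)
    have h3 : ∀ i ∈ I, d i - prefMax d i + offOpt c dmax (ref dlo d i) / π ≤
        pcr c dmax dlo π d i := fun i _ => le_max_left _ _
    have h4 : (∑ i ∈ I, (d i - prefMax d i + offOpt c dmax (ref dlo d i) / π)) ≤ c :=
      le_trans (le_trans (Finset.sum_le_sum h3) h2) h1
    rw [Finset.sum_add_distrib, ← Finset.sum_div] at h4
    have h5 : (∑ i ∈ I, (d i - prefMax d i)) = - ∑ i ∈ I, (prefMax d i - d i) := by
      rw [← Finset.sum_neg_distrib]; exact Finset.sum_congr rfl (fun i _ => by ring)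
    rw [h5] at h4
    have := (div_le_iff₀ hπ0).mp (by linarith :
      (∑ i ∈ I, offOpt c dmax (ref dlo d i)) / π ≤ c + ∑ i ∈ I, (prefMax d i - d i))
    linarith [this]
  -- every element of RS is ≤ π
  have hub : ∀ r ∈ RS, r ≤ π := by
    rintro r ⟨I, hIne, d, hd, rfl⟩
    have hB : 0 < c + ∑ i ∈ I, (prefMax d i - d i) := by
      have : 0 ≤ ∑ i ∈ I, (prefMax d i - d i) :=
        Finset.sum_nonneg (fun i _ => by linarith [le_prefMax d i])
      linarith
    rw [div_le_iff₀ hB]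
    linarith [key I d hd]
  have hRSne : RS.Nonempty := by
    refine ⟨_, Finset.univ, Finset.univ_nonempty_iff.mpr ⟨⟨0, hT⟩⟩,
      fun _ => dlo, fun t => ⟨le_refl _, hbd⟩, rfl⟩
  have hRSbdd : BddAbove RS := ⟨π, hub⟩
  -- π ≤ sSup RS
  have hge : π ≤ sSup RS := by
    refine le_of_forall_pos_le_add ?_
    intro ε hε
    set ε' : ℝ := min (c / 2) (c * ε / π) with hε'
    have hε'pos : 0 < ε' := lt_min (by linarith) (by positivity)
    have hε'c : ε' ≤ c / 2 := min_le_left _ _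
    have hε'ε : π * ε' ≤ c * ε := by
      have : ε' ≤ c * ε / π := min_le_right _ _
      calc π * ε' ≤ π * (c * ε / π) := by nlinarith
        _ = c * ε := by field_simp
    obtain ⟨s, hsS, hs⟩ := exists_lt_of_lt_csSup hSne (show c - ε' < sSup S by rw [hΦ']; linarith)
    obtain ⟨d, hd, rfl⟩ := hsS
    set I : Finset (Fin T) := Finset.univ.filter (fun t => 0 < pcr c dmax dlo π d t) with hI
    have hsum : (∑ i ∈ I, pcr c dmax dlo π d i) = ∑ t, pcr c dmax dlo π d t := by
      refine Finset.sum_filter_of_ne ?_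
      intro t _ ht
      exact lt_of_le_of_ne (hpcr0 d t) (Ne.symm ht)
    have hIne : I.Nonempty := by
      rw [Finset.nonempty_iff_ne_empty]
      intro h
      rw [h, Finset.sum_empty] at hsum
      rw [← hsum] at hs
      linarith
    have hval : ∀ i ∈ I, pcr c dmax dlo π d i =
        d i - prefMax d i + offOpt c dmax (ref dlo d i) / π := by
      intro i hi
      have hipos : 0 < pcr c dmax dlo π d i := (Finset.mem_filter.mp hi).2
      unfold pcr at hipos ⊢
      rcases le_or_gt (d i - prefMax d i + offOpt c dmax (ref dlo d i) / π) 0 with h | h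
      · rw [max_eq_right h] at hipos; linarith
      · exact max_eq_left h.le
    have hs2 : c - ε' < ∑ i ∈ I, (d i - prefMax d i + offOpt c dmax (ref dlo d i) / π) := by
      rw [← Finset.sum_congr rfl hval, hsum]; exact hs
    rw [Finset.sum_add_distrib, ← Finset.sum_div] at hs2
    set A : ℝ := ∑ i ∈ I, offOpt c dmax (ref dlo d i) with hA
    set B : ℝ := c + ∑ i ∈ I, (prefMax d i - d i) with hB
    have h5 : (∑ i ∈ I, (d i - prefMax d i)) = - ∑ i ∈ I, (prefMax d i - d i) := by
      rw [← Finset.sum_neg_distrib]; exact Finset.sum_congr rfl (fun i _ => by ring)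
    rw [h5] at hs2
    have hBc : c ≤ B := by
      have : 0 ≤ ∑ i ∈ I, (prefMax d i - d i) :=
        Finset.sum_nonneg (fun i _ => by linarith [le_prefMax d i])
      simp only [hB]; linarith
    have hBpos : 0 < B := lt_of_lt_of_le hc hBc
    have hAB : B - ε' < A / π := by simp only [hB] at *; linarith
    have hA2 : π * (B - ε') < A := by
      have := (lt_div_iff₀ hπ0).mp hAB
      linarith
    have hmemRS : A / B ∈ RS := ⟨I, hIne, d, hd, rfl⟩
    have : π - ε ≤ A / B := by
      rw [le_div_iff₀ hBpos]
      nlinarith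
    have := le_trans this (le_csSup hRSbdd hmemRS)
    linarith
  exact le_antisymm hge (csSup_le hRSne hub)
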